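/- arXiv:1901.10463 — 4 statements merged into one kernel-verified Lean document; each statement's English description precedes it below -/
import Mathlib

section
/- Let (X_i, S_i)_{i ≥ 1} be i.i.d. pairs of positive-integer-valued random variables with E[X_1] < ∞ and p := P(S_1 ≤ X_1) > 0. Define B_1 = 0 and B_{i+1} = X_i + B_i·1_{S_i > X_i} for i ≥ 1, and set P_i = (B_i + S_i − 1)·1_{S_i ≤ X_i}. Then almost surely, (Σ_{i=1}^M P_i) / (Σ_{i=1}^M 1_{S_i ≤ X_i}) → E[X_1]/p + E[S_1·1_{S_1 ≤ X_1}]/p − 1 as M → ∞. (This limit is the peak age of the discrete time LCFS G/G/1 queue with preemption.) -/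
open MeasureTheory ProbabilityTheory Filter

open Topology


namespace LcfsAux

open Finset

variable (c : ℕ → Prop) [DecidablePred c]

/-- Last index `< M` satisfying `c` (or `0` if none). -/
def Lf (M : ℕ) : ℕ := ((range M).filter c).sup id

lemma Lf_lt {M : ℕ} (hM : 0 < M) : Lf c M < M := by
  refine (Finset.sup_lt_iff (by simpa using hM)).2 fun b hb => ?_
  simpa using (mem_range.1 (mem_filter.1 hb).1)

lemma Lf_le (M : ℕ) : Lf c M ≤ M :=
  Finset.sup_le fun b hb => le_of_lt (by simpa using (mem_range.1 (mem_filter.1 hb).1))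

lemma Lf_succ (M : ℕ) : Lf c (M + 1) = if c M then M else Lf c M := by
  unfold Lf
  rw [Finset.range_add_one, Finset.filter_insert]
  split
  · rw [Finset.sup_insert]
    exact max_eq_left (Lf_le c M)
  · rfl

lemma subset_range_Lf (M : ℕ) : (range M).filter c ⊆ range (Lf c M + 1) := fun j hj =>
  mem_range.2 (Nat.lt_succ_of_le (Finset.le_sup (f := id) hj))

lemma card_le_Lf (M : ℕ) : ((range M).filter c).card ≤ Lf c M + 1 :=
  le_trans (card_le_card (subset_range_Lf c M)) (by simp)

lemma filter_Lf {M : ℕ} (hM : 0 < M) :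
    (range (Lf c M + 1)).filter c = (range M).filter c := by
  apply Finset.Subset.antisymm
  · intro j hj
    rw [mem_filter] at *
    exact ⟨mem_range.2 (lt_of_lt_of_le (mem_range.1 hj.1) (Lf_lt c hM)), hj.2⟩
  · intro j hj
    have := subset_range_Lf c M hj
    rw [mem_filter] at *
    exact ⟨this, hj.2⟩

lemma key_tendsto (x : ℕ → ℝ) {mu p : ℝ} (hp : 0 < p)
    (hT : Tendsto (fun n => (∑ i ∈ range n, x i) / n) atTop (𝓝 mu))
    (hN : Tendsto (fun n => (((range n).filter c).card : ℝ) / n) atTop (𝓝 p)) :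
    Tendsto (fun M => ((∑ i ∈ range M, x i) - ∑ i ∈ range (Lf c M), x i) / M)
      atTop (𝓝 0) := by
  set T : ℕ → ℝ := fun n => ∑ i ∈ range n, x i with hTdef
  set N : ℕ → ℕ := fun n => ((range n).filter c).card with hNdef
  have hNtop : Tendsto N atTop atTop := by
    rw [← tendsto_natCast_atTop_iff (R := ℝ)]
    have hmul : Tendsto (fun n : ℕ => (p / 2) * (n : ℝ)) atTop atTop :=
      (tendsto_natCast_atTop_atTop (R := ℝ)).const_mul_atTop (by linarith)
    refine tendsto_atTop_mono' atTop ?_ hmul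
    filter_upwards [hN.eventually (eventually_gt_nhds (half_lt_self hp)),
      eventually_gt_atTop 0] with n h1 h2
    have hn : (0 : ℝ) < n := by exact_mod_cast h2
    have := (lt_div_iff₀ hn).1 h1
    linarith
  have hLtop : Tendsto (fun M => Lf c M) atTop atTop := by
    refine tendsto_atTop_mono (fun M => ?_) ((tendsto_sub_atTop_nat 1).comp hNtop)
    have := card_le_Lf c M
    simp only [Function.comp_apply, hNdef]
    omega
  have hL1top : Tendsto (fun M => Lf c M + 1) atTop atTop :=
    (tendsto_add_atTop_nat 1).comp hLtop
  have hcomp : Tendsto (fun M => (N (Lf c M + 1) : ℝ) / ((Lf c M + 1 : ℕ) : ℝ))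
      atTop (𝓝 p) := hN.comp hL1top
  have hA : Tendsto (fun M => ((Lf c M + 1 : ℕ) : ℝ) / M) atTop (𝓝 1) := by
    have hq : Tendsto (fun M => ((N M : ℝ) / M) / ((N (Lf c M + 1) : ℝ) / ((Lf c M + 1 : ℕ) : ℝ)))
        atTop (𝓝 (p / p)) := hN.div hcomp hp.ne'
    rw [div_self hp.ne'] at hq
    refine hq.congr' ?_
    filter_upwards [eventually_gt_atTop 0,
      hcomp.eventually (eventually_gt_nhds (half_lt_self hp))] with M hM h2
    have hNe : N M = N (Lf c M + 1) := by
      simp only [hNdef]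
      rw [filter_Lf c hM]
    have hL1 : ((Lf c M + 1 : ℕ) : ℝ) ≠ 0 := by positivity
    have hNne : (N (Lf c M + 1) : ℝ) ≠ 0 := by
      intro h0
      rw [h0, zero_div] at h2
      linarith
    have hMne : (M : ℝ) ≠ 0 := by
      have : (0 : ℝ) < M := by exact_mod_cast hM
      exact this.ne'
    rw [hNe]
    field_simp
  have hA' : Tendsto (fun M => ((Lf c M : ℕ) : ℝ) / M) atTop (𝓝 1) := by
    have h := hA.sub tendsto_one_div_atTop_nhds_zero_nat
    rw [sub_zero] at h
    refine h.congr fun M => ?_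
    push_cast
    ring
  have hTL : Tendsto (fun M => T (Lf c M) / M) atTop (𝓝 mu) := by
    have h1 := (hT.comp hLtop).mul hA'
    rw [mul_one] at h1
    refine h1.congr' ?_
    filter_upwards [hLtop.eventually_ge_atTop 1] with M hM
    have hne : ((Lf c M : ℕ) : ℝ) ≠ 0 := by
      have : (0 : ℕ) < Lf c M := hM
      positivity
    simp only [Function.comp_apply]
    field_simp
    rfl
  have h := hT.sub hTL
  rw [sub_self] at h
  exact h.congr fun M => (sub_div _ _ _).symm

lemma b_eq (x s : ℕ → ℕ) (b : ℕ → ℝ) (hb0 : b 0 = 0)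
    (hrec : ∀ i, b (i + 1) = (x i : ℝ) + b i * (if x i < s i then 1 else 0)) :
    ∀ M, b M = (∑ i ∈ range M, (x i : ℝ))
      - ∑ i ∈ range (Lf (fun i => s i ≤ x i) M), (x i : ℝ) := by
  intro M
  induction M with
  | zero => simp [hb0, Lf]
  | succ M ih =>
    rw [hrec, ih, Lf_succ, Finset.sum_range_succ]
    by_cases h : s M ≤ x M
    · rw [if_pos h, if_neg (not_lt.2 h)]
      ring
    · rw [if_neg h, if_pos (not_le.1 h)]
      ring

lemma sum_b (x s : ℕ → ℕ) (b : ℕ → ℝ) (hb0 : b 0 = 0)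
    (hrec : ∀ i, b (i + 1) = (x i : ℝ) + b i * (if x i < s i then 1 else 0)) :
    ∀ M, ∑ i ∈ range M, b i * (if s i ≤ x i then 1 else 0)
      = (∑ i ∈ range M, (x i : ℝ)) - b M := by
  intro M
  induction M with
  | zero => simp [hb0]
  | succ M ih =>
    rw [Finset.sum_range_succ, ih, Finset.sum_range_succ, hrec]
    by_cases h : s M ≤ x M
    · rw [if_pos h, if_neg (not_lt.2 h)]
      ring
    · rw [if_neg h, if_pos (not_le.1 h)]
      ring

end LcfsAux


/-- Peak age of the discrete time LCFS G/G/1 queue with preemption: for i.i.d.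
pairs `(Xᵢ, Sᵢ)` of positive-integer random variables, with the age-at-generation
chain `B₁ = 0`, `B_{i+1} = Xᵢ + Bᵢ·1_{Sᵢ > Xᵢ}`, and peak values
`Pᵢ = (Bᵢ + Sᵢ − 1)·1_{Sᵢ ≤ Xᵢ}`, almost surely
`(Σ_{i=1}^M Pᵢ)/(Σ_{i=1}^M 1_{Sᵢ ≤ Xᵢ}) → E[X₁]/p + E[S₁·1_{S₁ ≤ X₁}]/p − 1`,
where `p = P(S₁ ≤ X₁) > 0`.  (Indexing here starts at `0` instead of `1`.) -/
theorem lcfs_peak_age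
    {Ω : Type*} [MeasureSpace Ω] [IsProbabilityMeasure (ℙ : Measure Ω)]
    (X S : ℕ → Ω → ℕ) (B : ℕ → Ω → ℝ)
    (hX : ∀ i, Measurable (X i)) (hS : ∀ i, Measurable (S i))
    (hXpos : ∀ i ω, 0 < X i ω) (hSpos : ∀ i ω, 0 < S i ω)
    (hindep : iIndepFun (fun i ω => (X i ω, S i ω)) ℙ)
    (hident : ∀ i,
      IdentDistrib (fun ω => (X i ω, S i ω)) (fun ω => (X 0 ω, S 0 ω)) ℙ ℙ)
    (hXint : Integrable (fun ω => (X 0 ω : ℝ)))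
    (hp : 0 < (ℙ {ω | S 0 ω ≤ X 0 ω}).toReal)
    (hB0 : ∀ ω, B 0 ω = 0)
    (hBrec : ∀ i ω, B (i + 1) ω
      = (X i ω : ℝ) + B i ω * (if X i ω < S i ω then (1 : ℝ) else 0)) :
    ∀ᵐ ω ∂(ℙ : Measure Ω),
      Tendsto (fun M =>
          (∑ i ∈ Finset.range M,
            (B i ω + (S i ω : ℝ) - 1) * (if S i ω ≤ X i ω then (1 : ℝ) else 0)) /
          (∑ i ∈ Finset.range M, (if S i ω ≤ X i ω then (1 : ℝ) else 0)))
        atTop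
        (nhds ((∫ ω', (X 0 ω' : ℝ)) / (ℙ {ω' | S 0 ω' ≤ X 0 ω'}).toReal
          + (∫ ω', (S 0 ω' : ℝ) * (if S 0 ω' ≤ X 0 ω' then (1 : ℝ) else 0)) /
              (ℙ {ω' | S 0 ω' ≤ X 0 ω'}).toReal
          - 1)) := by
  classical
  have hpair : ∀ i, Measurable (fun ω => (X i ω, S i ω)) := fun i =>
    (hX i).prodMk (hS i)
  -- strong law for any function of the pair
  have sl : ∀ φ : ℕ × ℕ → ℝ, Integrable (fun ω => φ (X 0 ω, S 0 ω)) ℙ →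
      ∀ᵐ ω ∂(ℙ : Measure Ω), Tendsto
        (fun n => (∑ i ∈ Finset.range n, φ (X i ω, S i ω)) / n) atTop
        (𝓝 (∫ ω', φ (X 0 ω', S 0 ω'))) := by
    intro φ hint
    have h1 : Pairwise (Function.onFun (IndepFun · · ℙ) fun i ω => φ (X i ω, S i ω)) := by
      intro i j hij
      exact (hindep.comp (fun _ => φ) (fun _ => measurable_of_countable φ)).indepFun hij
    have h2 : ∀ i, IdentDistrib (fun ω => φ (X i ω, S i ω))
        (fun ω => φ (X 0 ω, S 0 ω)) ℙ ℙ :=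
      fun i => (hident i).comp (measurable_of_countable φ)
    exact strong_law_ae_real _ hint h1 h2
  set φX : ℕ × ℕ → ℝ := fun q => (q.1 : ℝ) with hφX
  set φU : ℕ × ℕ → ℝ := fun q => (q.2 : ℝ) * (if q.2 ≤ q.1 then 1 else 0) with hφU
  set φC : ℕ × ℕ → ℝ := fun q => if q.2 ≤ q.1 then 1 else 0 with hφC
  have hX1 : ∀ ω, (1 : ℝ) ≤ (X 0 ω : ℝ) := fun ω => by exact_mod_cast hXpos 0 ω
  have intX : Integrable (fun ω => φX (X 0 ω, S 0 ω)) ℙ := hXint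
  have intU : Integrable (fun ω => φU (X 0 ω, S 0 ω)) ℙ := by
    refine hXint.mono' (((measurable_of_countable φU).comp (hpair 0)).aestronglyMeasurable)
      (ae_of_all _ fun ω => ?_)
    simp only [hφU, Function.comp_apply, Real.norm_eq_abs]
    split_ifs with h
    · rw [mul_one, abs_of_nonneg (by positivity)]
      exact_mod_cast h
    · simp
  have intC : Integrable (fun ω => φC (X 0 ω, S 0 ω)) ℙ := by
    refine hXint.mono' (((measurable_of_countable φC).comp (hpair 0)).aestronglyMeasurable)
      (ae_of_all _ fun ω => ?_)
    simp only [hφC, Function.comp_apply, Real.norm_eq_abs]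
    split_ifs with h
    · rw [abs_one]; exact hX1 ω
    · rw [abs_zero]; positivity
  have sC : MeasurableSet {ω | S 0 ω ≤ X 0 ω} := by
    have he : {ω | S 0 ω ≤ X 0 ω}
        = (fun ω => (X 0 ω, S 0 ω)) ⁻¹' {q : ℕ × ℕ | q.2 ≤ q.1} := rfl
    rw [he]
    exact hpair 0 ((Set.to_countable _).measurableSet)
  have hEC : (∫ ω', φC (X 0 ω', S 0 ω')) = (ℙ {ω' | S 0 ω' ≤ X 0 ω'}).toReal := by
    have he : (fun ω' => φC (X 0 ω', S 0 ω'))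
        = Set.indicator {ω' | S 0 ω' ≤ X 0 ω'} (fun _ => (1 : ℝ)) := by
      funext ω'
      by_cases h : S 0 ω' ≤ X 0 ω' <;>
        simp [hφC, Set.indicator_apply, h, Set.mem_setOf_eq]
    rw [he, integral_indicator_const _ sC]
    simp
    rfl
  filter_upwards [sl φX intX, sl φU intU, sl φC intC] with ω hTω hUω hCω
  set p := (ℙ {ω' | S 0 ω' ≤ X 0 ω'}).toReal with hpdef
  have hp' : 0 < p := hp
  -- pointwise sequences
  have hbM := LcfsAux.b_eq (fun i => X i ω) (fun i => S i ω) (fun i => B i ω)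
    (hB0 ω) (fun i => hBrec i ω)
  have hsb := LcfsAux.sum_b (fun i => X i ω) (fun i => S i ω) (fun i => B i ω)
    (hB0 ω) (fun i => hBrec i ω)
  have hCcard : Tendsto
      (fun n => (((Finset.range n).filter (fun i => S i ω ≤ X i ω)).card : ℝ) / n)
      atTop (𝓝 p) := by
    rw [← hEC]
    refine hCω.congr fun n => ?_
    rw [Finset.sum_boole]
  have hTω' : Tendsto (fun n => (∑ i ∈ Finset.range n, ((X i ω : ℝ))) / n) atTop
      (𝓝 (∫ ω', φX (X 0 ω', S 0 ω'))) := hTω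
  have hkey := LcfsAux.key_tendsto (fun i => S i ω ≤ X i ω) (fun i => (X i ω : ℝ))
    hp' hTω' hCcard
  have hB : Tendsto (fun M => B M ω / M) atTop (𝓝 0) :=
    hkey.congr fun M => by rw [← hbM M]
  have hnum : ∀ M, (∑ i ∈ Finset.range M,
        (B i ω + (S i ω : ℝ) - 1) * (if S i ω ≤ X i ω then (1 : ℝ) else 0))
      = ((∑ i ∈ Finset.range M, (X i ω : ℝ)) - B M ω)
        + (∑ i ∈ Finset.range M, φU (X i ω, S i ω))
        - (∑ i ∈ Finset.range M, φC (X i ω, S i ω)) := by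
    intro M
    rw [← hsb M, ← Finset.sum_add_distrib, ← Finset.sum_sub_distrib]
    refine Finset.sum_congr rfl fun i _ => ?_
    simp only [hφU, hφC]
    ring
  have hCω' : Tendsto (fun n => (∑ i ∈ Finset.range n, φC (X i ω, S i ω)) / n)
      atTop (𝓝 p) := by rw [← hEC]; exact hCω
  have hnumM : Tendsto (fun M =>
      (∑ i ∈ Finset.range M,
        (B i ω + (S i ω : ℝ) - 1) * (if S i ω ≤ X i ω then (1 : ℝ) else 0)) / M)
      atTop (𝓝 ((∫ ω', φX (X 0 ω', S 0 ω')) - 0 + (∫ ω', φU (X 0 ω', S 0 ω')) - p)) := by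
    have h := ((hTω'.sub hB).add hUω).sub hCω'
    refine h.congr fun M => ?_
    rw [hnum M]
    ring
  have hDenM : Tendsto
      (fun M => (∑ i ∈ Finset.range M, (if S i ω ≤ X i ω then (1 : ℝ) else 0)) / M)
      atTop (𝓝 p) := hCω'
  have hfin := hnumM.div hDenM hp'.ne'
  have hfin2 : Tendsto (fun M =>
      (∑ i ∈ Finset.range M,
        (B i ω + (S i ω : ℝ) - 1) * (if S i ω ≤ X i ω then (1 : ℝ) else 0)) /
      (∑ i ∈ Finset.range M, (if S i ω ≤ X i ω then (1 : ℝ) else 0)))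
      atTop (𝓝 (((∫ ω', φX (X 0 ω', S 0 ω')) - 0 + (∫ ω', φU (X 0 ω', S 0 ω')) - p) / p)) := by
    refine hfin.congr' ?_
    filter_upwards [eventually_gt_atTop 0] with M hM
    have hMne : (M : ℝ) ≠ 0 := by
      have : (0 : ℝ) < M := by exact_mod_cast hM
      exact this.ne'
    exact div_div_div_cancel_right₀ hMne _ _
  have hval : ((∫ ω', φX (X 0 ω', S 0 ω')) - 0 + (∫ ω', φU (X 0 ω', S 0 ω')) - p) / p
      = (∫ ω', φX (X 0 ω', S 0 ω')) / p + (∫ ω', φU (X 0 ω', S 0 ω')) / p - 1 := by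
    field_simp
    ring
  rw [hval] at hfin2
  exact hfin2
end

section
/- Let X be an integrable positive-integer-valued random variable that is independent of the pair (T₀, S) of integrable nonnegative-integer-valued random variables, and define T = max(T₀ − X, 0) + S. Then E[X·T] ≤ E[X]·E[T], i.e., X and T are negatively correlated. -/
open MeasureTheory ProbabilityTheory

/-- Chebyshev correlation inequality on `ℕ`: a probability measure, the identity,
and a bounded antitone function are negatively correlated. -/
lemma chebyshev_nat (μ : Measure ℕ) [IsProbabilityMeasure μ]
    (f : ℕ → ℝ) (hf : Antitone f) (C : ℝ) (hbd : ∀ n, |f n| ≤ C)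
    (hid : Integrable (fun n : ℕ => (n : ℝ)) μ) :
    ∫ n : ℕ, (n : ℝ) * f n ∂μ ≤ (∫ n : ℕ, (n : ℝ) ∂μ) * ∫ n, f n ∂μ := by
  have hfint : Integrable f μ := by
    refine Integrable.mono' (integrable_const C) (measurable_of_countable f).aestronglyMeasurable
      (Filter.Eventually.of_forall fun n => hbd n)
  have hnf : Integrable (fun n : ℕ => (n : ℝ) * f n) μ := by
    refine Integrable.mono' (hid.const_mul C)
      (measurable_of_countable _).aestronglyMeasurable
      (Filter.Eventually.of_forall fun n => ?_)
    rw [Real.norm_eq_abs, abs_mul, abs_of_nonneg (by positivity : (0:ℝ) ≤ (n:ℝ)),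
      mul_comm C]
    exact mul_le_mul_of_nonneg_left (hbd n) (by positivity)
  set π := μ.prod μ with hπ
  have h1 : Integrable (fun z : ℕ × ℕ => ((z.1 : ℝ) * f z.1) * 1) π :=
    hnf.mul_prod (integrable_const 1)
  have h2 : Integrable (fun z : ℕ × ℕ => (1 : ℝ) * ((z.2 : ℝ) * f z.2)) π :=
    (integrable_const 1).mul_prod hnf
  have h3 : Integrable (fun z : ℕ × ℕ => (z.1 : ℝ) * f z.2) π := hid.mul_prod hfint
  have h4 : Integrable (fun z : ℕ × ℕ => f z.1 * (z.2 : ℝ)) π := hfint.mul_prod hid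
  have key : ∫ z : ℕ × ℕ, (((z.1 : ℝ) - z.2) * (f z.1 - f z.2)) ∂π ≤ 0 := by
    apply integral_nonpos
    intro z
    show ((z.1 : ℝ) - z.2) * (f z.1 - f z.2) ≤ 0
    rcases le_total z.1 z.2 with h | h
    · have h1 : (z.1 : ℝ) ≤ z.2 := Nat.cast_le.mpr h
      have h2 := hf h
      nlinarith
    · have h1 : (z.2 : ℝ) ≤ z.1 := Nat.cast_le.mpr h
      have h2 := hf h
      nlinarith
  have expand : ∫ z : ℕ × ℕ, (((z.1 : ℝ) - z.2) * (f z.1 - f z.2)) ∂π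
      = ∫ z : ℕ × ℕ, (((z.1 : ℝ) * f z.1) * 1 + (1 : ℝ) * ((z.2 : ℝ) * f z.2)
          - ((z.1 : ℝ) * f z.2 + f z.1 * (z.2 : ℝ))) ∂π := by
    congr 1; funext z; ring
  have hAB : Integrable (fun z : ℕ × ℕ => ((z.1 : ℝ) * f z.1) * 1
      + (1 : ℝ) * ((z.2 : ℝ) * f z.2)) π := h1.add h2
  have hCD : Integrable (fun z : ℕ × ℕ => (z.1 : ℝ) * f z.2 + f z.1 * (z.2 : ℝ)) π :=
    h3.add h4
  have e1 : ∫ z : ℕ × ℕ, ((z.1 : ℝ) * f z.1) * 1 ∂π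
      = (∫ n : ℕ, (n : ℝ) * f n ∂μ) * ∫ _ : ℕ, (1 : ℝ) ∂μ :=
    integral_prod_mul (fun n : ℕ => (n : ℝ) * f n) (fun _ : ℕ => (1 : ℝ))
  have e2 : ∫ z : ℕ × ℕ, (1 : ℝ) * ((z.2 : ℝ) * f z.2) ∂π
      = (∫ _ : ℕ, (1 : ℝ) ∂μ) * ∫ n : ℕ, (n : ℝ) * f n ∂μ :=
    integral_prod_mul (fun _ : ℕ => (1 : ℝ)) (fun n : ℕ => (n : ℝ) * f n)
  rw [expand, integral_sub hAB hCD, integral_add h1 h2,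
    integral_add h3 h4, e1, e2, integral_prod_mul, integral_prod_mul,
    integral_const] at key
  simp only [measure_univ, ENNReal.toReal_one, probReal_univ, one_smul, mul_one, one_mul] at key
  nlinarith [key]

/-- In the Lindley recursion `T = max(T₀ − X, 0) + S` of a FCFS discrete time
queue, if the positive-integer-valued inter-arrival time `X` is integrable and
independent of the pair `(T₀, S)` of integrable nonnegative-integer-valued
random variables, then `X` and `T` are negatively correlated:
`E[X·T] ≤ E[X]·E[T]`. -/
theorem lindley_negative_correlation
    {Ω : Type*} [MeasureSpace Ω] [IsProbabilityMeasure (ℙ : Measure Ω)]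
    (X T₀ S : Ω → ℕ)
    (hX : Measurable X) (hT₀ : Measurable T₀) (hS : Measurable S)
    (hXpos : ∀ ω, 0 < X ω)
    (hXint : Integrable (fun ω => (X ω : ℝ)))
    (hT₀int : Integrable (fun ω => (T₀ ω : ℝ)))
    (hSint : Integrable (fun ω => (S ω : ℝ)))
    (hindep : IndepFun X (fun ω => (T₀ ω, S ω)) ℙ) :
    ∫ ω, (X ω : ℝ) * (max ((T₀ ω : ℝ) - (X ω : ℝ)) 0 + (S ω : ℝ))
      ≤ (∫ ω, (X ω : ℝ))
          * ∫ ω, (max ((T₀ ω : ℝ) - (X ω : ℝ)) 0 + (S ω : ℝ)) := by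
  classical
  set Y : Ω → ℕ × ℕ := fun ω => (T₀ ω, S ω) with hYdef
  have hY : Measurable Y := hT₀.prodMk hS
  set μ : Measure ℕ := Measure.map X ℙ with hμ
  set ν : Measure (ℕ × ℕ) := Measure.map Y ℙ with hν
  haveI : IsProbabilityMeasure μ := Measure.isProbabilityMeasure_map hX.aemeasurable
  haveI : IsProbabilityMeasure ν := Measure.isProbabilityMeasure_map hY.aemeasurable
  have hmap : Measure.map (fun ω => (X ω, Y ω)) ℙ = μ.prod ν :=
    (indepFun_iff_map_prod_eq_prod_map_map hX.aemeasurable hY.aemeasurable).mp hindep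
  -- the functions on the distribution side
  set g : ℕ × (ℕ × ℕ) → ℝ := fun p => max ((p.2.1 : ℝ) - p.1) 0 + p.2.2 with hgdef
  -- transfer integrals
  have hXYmeas : Measurable (fun ω => (X ω, Y ω)) := hX.prodMk hY
  have hLHS : ∫ ω, (X ω : ℝ) * (max ((T₀ ω : ℝ) - (X ω : ℝ)) 0 + (S ω : ℝ))
      = ∫ p, (p.1 : ℝ) * g p ∂(μ.prod ν) := by
    rw [← hmap, integral_map hXYmeas.aemeasurable
      (measurable_of_countable _).aestronglyMeasurable]
  have hT : ∫ ω, (max ((T₀ ω : ℝ) - (X ω : ℝ)) 0 + (S ω : ℝ))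
      = ∫ p, g p ∂(μ.prod ν) := by
    rw [← hmap, integral_map hXYmeas.aemeasurable
      (measurable_of_countable _).aestronglyMeasurable]
  have hEX : ∫ ω, (X ω : ℝ) = ∫ n : ℕ, (n : ℝ) ∂μ := by
    rw [hμ, integral_map hX.aemeasurable (measurable_of_countable _).aestronglyMeasurable]
  -- integrability on the distribution side
  have hidμ : Integrable (fun n : ℕ => (n : ℝ)) μ := by
    rwa [hμ, integrable_map_measure (measurable_of_countable _).aestronglyMeasurable
      hX.aemeasurable]
  have htsν : Integrable (fun q : ℕ × ℕ => (q.1 : ℝ) + q.2) ν := by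
    rw [hν, integrable_map_measure (measurable_of_countable _).aestronglyMeasurable
      hY.aemeasurable]
    exact hT₀int.add hSint
  have hgbound : ∀ p : ℕ × (ℕ × ℕ), |g p| ≤ (p.2.1 : ℝ) + p.2.2 := by
    intro p
    have h0 : (0:ℝ) ≤ g p := by positivity
    rw [abs_of_nonneg h0]
    have : max ((p.2.1 : ℝ) - p.1) 0 ≤ p.2.1 := by
      apply max_le _ (by positivity)
      have : (0:ℝ) ≤ (p.1 : ℝ) := by positivity
      linarith
    simpa only [hgdef] using add_le_add_left this _
  have hgint : Integrable g (μ.prod ν) := by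
    refine Integrable.mono' ((integrable_const (1:ℝ)).mul_prod htsν)
      (measurable_of_countable _).aestronglyMeasurable
      (Filter.Eventually.of_forall fun p => ?_)
    simpa using hgbound p
  have hhint : Integrable (fun p => (p.1 : ℝ) * g p) (μ.prod ν) := by
    refine Integrable.mono' (hidμ.mul_prod htsν)
      (measurable_of_countable _).aestronglyMeasurable
      (Filter.Eventually.of_forall fun p => ?_)
    rw [Real.norm_eq_abs, abs_mul, abs_of_nonneg (by positivity : (0:ℝ) ≤ (p.1:ℝ))]
    exact mul_le_mul_of_nonneg_left (hgbound p) (by positivity)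
  -- Fubini and pointwise Chebyshev
  rw [hLHS, hT, hEX]
  rw [integral_prod_symm _ hhint, integral_prod_symm _ hgint, ← integral_const_mul]
  refine integral_mono hhint.integral_prod_right
    (hgint.integral_prod_right.const_mul _) fun q => ?_
  -- pointwise: apply chebyshev_nat with f = fun n => max (q.1 - n) 0 + q.2
  have := chebyshev_nat μ (fun n => max ((q.1 : ℝ) - n) 0 + q.2)
    (fun a b hab => by
      have : (a:ℝ) ≤ b := Nat.cast_le.mpr hab
      have h := max_le_max (sub_le_sub_left this (q.1:ℝ)) (le_refl (0:ℝ))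
      simpa using add_le_add_left h (q.2:ℝ))
    ((q.1 : ℝ) + q.2)
    (fun n => hgbound (n, q)) hidμ
  simpa [hgdef] using this
end

section
/- Let γ ∈ (0,1), let X be geometric on {1,2,...} with parameter γ (P(X = x) = γ(1−γ)^{x−1} for integers x ≥ 1), and let T be a nonnegative-integer-valued random variable independent of X with E[T] < ∞. Then E[X·max(T − X, 0)] = (2E[(1−γ)^T] − 2)/γ² + (E[T(1−γ)^T] − E[(1−γ)^T] + E[T] + 1)/γ. -/
open MeasureTheory ProbabilityTheory Finset
open scoped ENNReal NNReal


noncomputable def gS (γ : ℝ) (t : ℕ) : ℝ :=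
  ∑ x ∈ Finset.range (t+1), (x:ℝ) * ((t:ℝ) - x) * (1-γ)^(x-1)

noncomputable def gA (γ : ℝ) (t : ℕ) : ℝ :=
  ∑ x ∈ Finset.range (t+1), (x:ℝ) * (1-γ)^(x-1)

lemma gA_closed (γ : ℝ) (t : ℕ) :
    γ^2 * gA γ t = 1 - ((t:ℝ)+1)*(1-γ)^t + (t:ℝ)*(1-γ)^(t+1) := by
  induction t with
  | zero => simp [gA]
  | succ n ih =>
    rw [gA, Finset.sum_range_succ, ← gA]
    simp only [Nat.add_sub_cancel]
    push_cast
    linear_combination ih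

lemma gS_step (γ : ℝ) (n : ℕ) : gS γ (n+1) = gS γ n + gA γ n := by
  rw [gS, Finset.sum_range_succ]
  have h : ∀ x ∈ Finset.range (n+1),
      (x:ℝ) * (((n+1:ℕ):ℝ) - (x:ℝ)) * (1-γ)^(x-1)
        = (x:ℝ)*((n:ℝ)-x)*(1-γ)^(x-1) + (x:ℝ)*(1-γ)^(x-1) := by
    intro x _; push_cast; ring
  rw [Finset.sum_congr rfl h, Finset.sum_add_distrib]
  simp [gS, gA]

lemma gS_closed (γ : ℝ) (t : ℕ) :
    γ^3 * gS γ t = 2*(1-γ)^t - 2 + γ*((t:ℝ)*(1-γ)^t - (1-γ)^t + t + 1) := by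
  induction t with
  | zero => simp [gS]
  | succ n ih =>
    rw [gS_step]
    push_cast
    linear_combination ih + γ * gA_closed γ n

lemma gS_eq (γ : ℝ) (hγ0 : 0 < γ) (t : ℕ) :
    γ * gS γ t = (2*(1-γ)^t - 2)/γ^2 + ((t:ℝ)*(1-γ)^t - (1-γ)^t + t + 1)/γ := by
  have h := gS_closed γ t
  field_simp
  linear_combination h

lemma gS_nonneg (γ : ℝ) (hγ1 : γ < 1) (t : ℕ) : 0 ≤ gS γ t := by
  apply Finset.sum_nonneg
  intro x hx
  have hx' : (x:ℝ) ≤ t := by exact_mod_cast Nat.lt_succ_iff.mp (Finset.mem_range.mp hx)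
  have : (0:ℝ) ≤ 1 - γ := by linarith
  exact mul_nonneg (mul_nonneg (Nat.cast_nonneg x) (by linarith)) (pow_nonneg this _)

lemma gS_bound (γ : ℝ) (hγ0 : 0 < γ) (hγ1 : γ < 1) (t : ℕ) :
    γ * gS γ t ≤ (2*(t:ℝ)+1)/γ := by
  rw [gS_eq γ hγ0]
  have hq0 : (0:ℝ) ≤ 1 - γ := by linarith
  have hq1 : (1-γ)^t ≤ 1 := pow_le_one₀ hq0 (by linarith)
  have hqn : 0 ≤ (1-γ)^t := pow_nonneg hq0 t
  have ht : (0:ℝ) ≤ t := Nat.cast_nonneg t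
  have h1 : (2*(1-γ)^t - 2)/γ^2 ≤ 0 := div_nonpos_of_nonpos_of_nonneg (by linarith) (by positivity)
  have h2 : ((t:ℝ)*(1-γ)^t - (1-γ)^t + t + 1)/γ ≤ (2*(t:ℝ)+1)/γ := by
    gcongr
    nlinarith
  linarith

/-- For `X` geometric on `{1,2,...}` with parameter `γ ∈ (0,1)` (so
`P(X = x) = γ(1−γ)^{x−1}` for `x ≥ 1`) and `T` a nonnegative-integer-valued
random variable independent of `X` with `E[T] < ∞`,
`E[X·max(T−X,0)] = (2E[(1−γ)^T] − 2)/γ²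
  + (E[T(1−γ)^T] − E[(1−γ)^T] + E[T] + 1)/γ`. -/
theorem geometric_cross_term
    {Ω : Type*} [MeasureSpace Ω] [IsProbabilityMeasure (ℙ : Measure Ω)]
    (γ : ℝ) (hγ0 : 0 < γ) (hγ1 : γ < 1)
    (X T : Ω → ℕ) (hX : Measurable X) (hT : Measurable T)
    (hgeom : ∀ x : ℕ, 1 ≤ x →
      ℙ {ω | X ω = x} = ENNReal.ofReal (γ * (1 - γ) ^ (x - 1)))
    (hindep : IndepFun X T ℙ)
    (hTint : Integrable (fun ω => (T ω : ℝ))) :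
    ∫ ω, (X ω : ℝ) * max ((T ω : ℝ) - (X ω : ℝ)) 0
      = (2 * (∫ ω, (1 - γ) ^ T ω) - 2) / γ ^ 2
        + ((∫ ω, (T ω : ℝ) * (1 - γ) ^ T ω) - (∫ ω, (1 - γ) ^ T ω)
            + (∫ ω, (T ω : ℝ)) + 1) / γ := by
  have hq0 : (0:ℝ) ≤ 1 - γ := by linarith
  have hq1 : (1:ℝ) - γ ≤ 1 := by linarith
  set ν : Measure ℕ := Measure.map T ℙ with hν
  haveI : IsProbabilityMeasure ν := Measure.isProbabilityMeasure_map hT.aemeasurable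
  -- integrability facts over ν
  have hIT : Integrable (fun n : ℕ => (n:ℝ)) ν := by
    rw [hν, integrable_map_measure (measurable_of_countable _).aestronglyMeasurable
      hT.aemeasurable]
    exact hTint
  have hI1 : Integrable (fun n : ℕ => (1-γ)^n) ν := by
    apply Integrable.mono' (integrable_const (1:ℝ))
      (measurable_of_countable _).aestronglyMeasurable
    filter_upwards with n
    rw [Real.norm_eq_abs, abs_of_nonneg (pow_nonneg hq0 n)]
    exact pow_le_one₀ hq0 hq1
  have hI2 : Integrable (fun n : ℕ => (n:ℝ) * (1-γ)^n) ν := by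
    apply Integrable.mono' hIT (measurable_of_countable _).aestronglyMeasurable
    filter_upwards with n
    rw [Real.norm_eq_abs, abs_of_nonneg (mul_nonneg (Nat.cast_nonneg n) (pow_nonneg hq0 n))]
    calc (n:ℝ) * (1-γ)^n ≤ (n:ℝ) * 1 := by gcongr; exact pow_le_one₀ hq0 hq1
      _ = n := mul_one _
  -- key pointwise cast identity
  have cast_eq : ∀ x t : ℕ, (x:ℝ) * max ((t:ℝ) - x) 0 = ((x * (t - x) : ℕ) : ℝ) := by
    intro x t
    rcases le_total x t with h | h
    · rw [max_eq_left (sub_nonneg.mpr (by exact_mod_cast h))]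
      push_cast [h]
      ring
    · rw [max_eq_right (sub_nonpos.mpr (by exact_mod_cast h)), Nat.sub_eq_zero_of_le h]
      simp
  -- LHS as lintegral
  have hL1 : ∫ ω, (X ω:ℝ) * max ((T ω:ℝ) - X ω) 0
      = (∫⁻ ω, ((X ω * (T ω - X ω) : ℕ) : ℝ≥0∞) ∂ℙ).toReal := by
    rw [integral_eq_lintegral_of_nonneg_ae]
    · congr 1
      apply lintegral_congr
      intro ω
      rw [cast_eq]
      exact ENNReal.ofReal_natCast _
    · filter_upwards with ω
      rw [cast_eq]
      exact Nat.cast_nonneg _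
    · exact ((measurable_of_countable
        (fun p : ℕ × ℕ => (p.1:ℝ) * max ((p.2:ℝ) - p.1) 0)).comp
        (hX.prodMk hT)).aestronglyMeasurable
  have hL2 : ∫ n, γ * gS γ n ∂ν = (∫⁻ n, ENNReal.ofReal (γ * gS γ n) ∂ν).toReal := by
    rw [integral_eq_lintegral_of_nonneg_ae]
    · filter_upwards with n
      exact mul_nonneg hγ0.le (gS_nonneg γ hγ1 n)
    · exact (measurable_of_countable _).aestronglyMeasurable
  -- the central lintegral computation
  have key : ∫⁻ ω, ((X ω * (T ω - X ω) : ℕ) : ℝ≥0∞) ∂ℙ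
      = ∫⁻ n, ENNReal.ofReal (γ * gS γ n) ∂ν := by
    have hmap : ∫⁻ ω, ((X ω * (T ω - X ω) : ℕ) : ℝ≥0∞) ∂ℙ
        = ∫⁻ p : ℕ × ℕ, ((p.1 * (p.2 - p.1) : ℕ) : ℝ≥0∞)
            ∂(Measure.map (fun ω => (X ω, T ω)) ℙ) := by
      rw [lintegral_map (measurable_of_countable _) (hX.prodMk hT)]
    rw [hmap, lintegral_countable', lintegral_countable', ENNReal.tsum_prod',
      ENNReal.tsum_comm]
    apply tsum_congr
    intro t
    have hμ2 : ∀ x : ℕ, (Measure.map (fun ω => (X ω, T ω)) ℙ) {(x, t)}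
        = ℙ (X ⁻¹' {x}) * ℙ (T ⁻¹' {t}) := by
      intro x
      rw [Measure.map_apply (hX.prodMk hT) (measurableSet_singleton _)]
      have hpre : (fun ω => (X ω, T ω)) ⁻¹' {(x, t)} = X ⁻¹' {x} ∩ T ⁻¹' {t} := by
        ext ω; simp [Prod.ext_iff]
      rw [hpre]
      exact hindep.measure_inter_preimage_eq_mul _ _ (measurableSet_singleton _)
        (measurableSet_singleton _)
    have hνt : ν {t} = ℙ (T ⁻¹' {t}) := Measure.map_apply hT (measurableSet_singleton _)
    have inner : ∑' x : ℕ, ((x * (t - x) : ℕ) : ℝ≥0∞) * ℙ (X ⁻¹' {x})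
        = ENNReal.ofReal (γ * gS γ t) := by
      rw [tsum_eq_sum (s := Finset.range (t+1)) ?later]
      case later =>
        intro x hx
        have hxt : t < x := by simpa using Finset.mem_range.not.mp hx
        simp [Nat.sub_eq_zero_of_le hxt.le]
      have hterm : ∀ x ∈ Finset.range (t+1),
          ((x * (t - x) : ℕ) : ℝ≥0∞) * ℙ (X ⁻¹' {x})
            = ENNReal.ofReal ((x:ℝ) * ((t:ℝ) - x) * (γ * (1-γ)^(x-1))) := by
        intro x hx
        have hxt : x ≤ t := Nat.lt_succ_iff.mp (Finset.mem_range.mp hx)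
        rcases Nat.eq_zero_or_pos x with rfl | hpos
        · simp
        · have hp : ℙ (X ⁻¹' {x}) = ENNReal.ofReal (γ * (1 - γ) ^ (x - 1)) := by
            have : X ⁻¹' {x} = {ω | X ω = x} := by ext ω; simp
            rw [this]; exact hgeom x hpos
          rw [hp, ← ENNReal.ofReal_natCast, ← ENNReal.ofReal_mul (Nat.cast_nonneg _)]
          congr 1
          push_cast [Nat.cast_sub hxt]
          ring
        
      rw [Finset.sum_congr rfl hterm,
        ← ENNReal.ofReal_sum_of_nonneg (fun x hx => ?nn)]
      case nn =>
        have hxt : (x:ℝ) ≤ t := by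
          exact_mod_cast Nat.lt_succ_iff.mp (Finset.mem_range.mp hx)
        have h1 : (0:ℝ) ≤ γ * (1-γ)^(x-1) := mul_nonneg hγ0.le (pow_nonneg hq0 _)
        exact mul_nonneg (mul_nonneg (Nat.cast_nonneg _) (by linarith)) h1
      congr 1
      rw [gS, Finset.mul_sum]
      exact Finset.sum_congr rfl (fun x _ => by ring)
    calc ∑' x : ℕ, ((x * (t - x) : ℕ) : ℝ≥0∞)
          * (Measure.map (fun ω => (X ω, T ω)) ℙ) {(x, t)}
        = ∑' x : ℕ, (((x * (t - x) : ℕ) : ℝ≥0∞) * ℙ (X ⁻¹' {x})) * ℙ (T ⁻¹' {t}) := by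
          apply tsum_congr; intro x; rw [hμ2, mul_assoc]
      _ = (∑' x : ℕ, ((x * (t - x) : ℕ) : ℝ≥0∞) * ℙ (X ⁻¹' {x})) * ℙ (T ⁻¹' {t}) :=
          ENNReal.tsum_mul_right
      _ = ENNReal.ofReal (γ * gS γ t) * ν {t} := by rw [inner, hνt]
  have hmain : ∫ ω, (X ω:ℝ) * max ((T ω:ℝ) - X ω) 0 = ∫ n, γ * gS γ n ∂ν := by
    rw [hL1, hL2, key]
  rw [hmain]
  have hcong : ∫ n, γ * gS γ n ∂ν
      = ∫ n, ((2*(1-γ)^n - 2)/γ^2 + ((n:ℝ)*(1-γ)^n - (1-γ)^n + n + 1)/γ) ∂ν :=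
    integral_congr_ae (by filter_upwards with n; exact gS_eq γ hγ0 n)
  have B1 : Integrable (fun n : ℕ => 2*(1-γ)^n) ν := by exact hI1.const_mul 2
  have B3 : Integrable (fun n : ℕ => (n:ℝ)*(1-γ)^n - (1-γ)^n) ν := by exact hI2.sub hI1
  have B2 : Integrable (fun n : ℕ => (n:ℝ)*(1-γ)^n - (1-γ)^n + n) ν := by exact B3.add hIT
  have A1 : Integrable (fun n : ℕ => (2*(1-γ)^n - 2)/γ^2) ν := by
    exact (B1.sub (integrable_const 2)).div_const _
  have A2 : Integrable (fun n : ℕ => ((n:ℝ)*(1-γ)^n - (1-γ)^n + n + 1)/γ) ν := by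
    exact (B2.add (integrable_const 1)).div_const _
  rw [hcong, integral_add A1 A2, integral_div, integral_div,
    integral_sub B1 (integrable_const 2), integral_const_mul,
    integral_add B2 (integrable_const 1), integral_add B3 hIT,
    integral_sub hI2 hI1, integral_const, integral_const]
  simp only [measure_univ, probReal_univ, ENNReal.toReal_one, smul_eq_mul, one_mul, mul_one]
  rw [hν, integral_map hT.aemeasurable (measurable_of_countable _).aestronglyMeasurable,
    integral_map hT.aemeasurable (measurable_of_countable _).aestronglyMeasurable,
    integral_map hT.aemeasurable (measurable_of_countable _).aestronglyMeasurable]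
end

section
/- Let γ ∈ (0,1), let S be a positive-integer-valued random variable with finite mean E[S] = 1/μ, set ρ = γ/μ and assume ρ < 1, let V be a positive-integer-valued random variable with finite mean E[V], and let L_S(z) = E[z^S] and L_V(z) = E[z^V]. Then the function g(z) = [(1−ρ)(1−z)L_S(z) / ((1−z) − γ(1−L_S(z)))] · (1 − L_V(z)) / (E[V](1−z)) is differentiable at z = 1−γ with derivative g′(1−γ) = ((1−ρ)/(γ E[V])) · ((1 − L_V(1−γ)) / (γ L_S(1−γ)) − L_V′(1−γ)), where L_V′(1−γ) = E[V(1−γ)^{V−1}]. -/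
open MeasureTheory ProbabilityTheory

private lemma aux_geom_bound {r : ℝ} (hr0 : 0 ≤ r) (hr1 : r < 1) (n : ℕ) :
    (n : ℝ) * r ^ (n - 1) ≤ ((1 - r)⁻¹) ^ 2 := by
  have hr1' : (1 : ℝ) - r ≠ 0 := by linarith
  have h1 : HasSum (fun k : ℕ => (k : ℝ) * r ^ k) (r / (1 - r) ^ 2) :=
    hasSum_coe_mul_geometric_of_norm_lt_one (by rwa [Real.norm_eq_abs, abs_of_nonneg hr0])
  have h2 : HasSum (fun k : ℕ => r ^ k) ((1 - r)⁻¹) :=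
    hasSum_geometric_of_lt_one hr0 hr1
  have hs : HasSum (fun k : ℕ => ((k : ℝ) + 1) * r ^ k) (((1 - r)⁻¹) ^ 2) := by
    have := h1.add h2
    have hval : r / (1 - r) ^ 2 + (1 - r)⁻¹ = ((1 - r)⁻¹) ^ 2 := by
      field_simp; ring
    rw [hval] at this
    convert this using 2 with k
    ring
  cases n with
  | zero => simp; positivity
  | succ m =>
      have := le_hasSum hs m (fun k _ => by positivity)
      simpa using this

private lemma pgf_hasDerivAt {Ω : Type*} [MeasureSpace Ω]
    [IsProbabilityMeasure (ℙ : Measure Ω)]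
    (N : Ω → ℕ) (hN : Measurable N) {x : ℝ} (hx : |x| < 1) :
    HasDerivAt (fun z : ℝ => ∫ ω, z ^ N ω)
      (∫ ω, (N ω : ℝ) * x ^ (N ω - 1)) x := by
  set r : ℝ := (1 + |x|) / 2 with hr
  have hx0 : 0 ≤ |x| := abs_nonneg x
  have hr0 : 0 ≤ r := by positivity
  have hr1 : r < 1 := by rw [hr]; linarith
  have hε : (0 : ℝ) < (1 - |x|) / 2 := by linarith
  have key := hasDerivAt_integral_of_dominated_loc_of_deriv_le
    (F := fun z ω => z ^ N ω) (F' := fun z ω => (N ω : ℝ) * z ^ (N ω - 1))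
    (x₀ := x) (bound := fun _ => ((1 - r)⁻¹) ^ 2) (μ := (ℙ : Measure Ω)) (Metric.ball_mem_nhds x hε)
    ?_ ?_ ?_ ?_ ?_ ?_
  · exact key.2
  · exact Filter.Eventually.of_forall fun z =>
      ((measurable_from_nat (f := fun n : ℕ => z ^ n)).comp hN).aestronglyMeasurable
  · refine (integrable_const (1 : ℝ)).mono'
      ((measurable_from_nat (f := fun n : ℕ => x ^ n)).comp hN).aestronglyMeasurable ?_
    refine Filter.Eventually.of_forall fun ω => ?_
    rw [Real.norm_eq_abs, abs_pow]
    exact pow_le_one₀ hx0 hx.le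
  · exact ((measurable_from_nat
      (f := fun n : ℕ => (n : ℝ) * x ^ (n - 1))).comp hN).aestronglyMeasurable
  · refine Filter.Eventually.of_forall fun ω => fun z hz => ?_
    have hzr : |z| ≤ r := by
      have := abs_sub_abs_le_abs_sub z x
      have h2 : |z - x| < (1 - |x|) / 2 := by simpa [Metric.mem_ball, Real.dist_eq] using hz
      rw [hr]; linarith
    rw [Real.norm_eq_abs, abs_mul, abs_pow, Nat.abs_cast]
    calc (N ω : ℝ) * |z| ^ (N ω - 1) ≤ (N ω : ℝ) * r ^ (N ω - 1) :=
          mul_le_mul_of_nonneg_left (pow_le_pow_left₀ (abs_nonneg z) hzr _) (Nat.cast_nonneg _)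
      _ ≤ ((1 - r)⁻¹) ^ 2 := aux_geom_bound hr0 hr1 _
  · exact integrable_const _
  · exact Filter.Eventually.of_forall fun ω => fun z _ => hasDerivAt_pow (N ω) z

/-- The probability generating function
`g(z) = [(1−ρ)(1−z)L_S(z)/((1−z) − γ(1−L_S(z)))]·(1 − L_V(z))/(E[V](1−z))`
of the system time in a stable discrete time FCFS Ber/G/1 queue with vacations
is differentiable at `z = 1−γ` with derivative
`g′(1−γ) = ((1−ρ)/(γE[V]))·((1 − L_V(1−γ))/(γL_S(1−γ)) − L_V′(1−γ))`, where
`L_V′(1−γ) = E[V(1−γ)^{V−1}]`. -/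
theorem bgv_pgf_deriv_at
    {Ω : Type*} [MeasureSpace Ω] [IsProbabilityMeasure (ℙ : Measure Ω)]
    (γ μ : ℝ) (hγ0 : 0 < γ) (hγ1 : γ < 1)
    (S V : Ω → ℕ) (hS : Measurable S) (hV : Measurable V)
    (hSpos : ∀ ω, 0 < S ω) (hVpos : ∀ ω, 0 < V ω)
    (hSint : Integrable (fun ω => (S ω : ℝ)))
    (hVint : Integrable (fun ω => (V ω : ℝ)))
    (hμ : ∫ ω, (S ω : ℝ) = 1 / μ)
    (hρ : γ / μ < 1) :
    HasDerivAt
      (fun z : ℝ =>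
        ((1 - γ / μ) * (1 - z) * (∫ ω, z ^ S ω)
            / ((1 - z) - γ * (1 - ∫ ω, z ^ S ω)))
          * ((1 - ∫ ω, z ^ V ω) / ((∫ ω, (V ω : ℝ)) * (1 - z))))
      ((1 - γ / μ) / (γ * ∫ ω, (V ω : ℝ))
        * ((1 - ∫ ω, (1 - γ) ^ V ω) / (γ * ∫ ω, (1 - γ) ^ S ω)
            - ∫ ω, (V ω : ℝ) * (1 - γ) ^ (V ω - 1)))
      (1 - γ) := by
  set x : ℝ := 1 - γ with hxdef
  have hx : |x| < 1 := by rw [abs_lt]; constructor <;> [linarith; linarith]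
  set A : ℝ := 1 - γ / μ with hA
  set a : ℝ := ∫ ω, x ^ S ω with ha
  set b : ℝ := ∫ ω, x ^ V ω with hb
  set a' : ℝ := ∫ ω, (S ω : ℝ) * x ^ (S ω - 1) with ha'
  set b' : ℝ := ∫ ω, (V ω : ℝ) * x ^ (V ω - 1) with hb'
  set m : ℝ := ∫ ω, (V ω : ℝ) with hm
  have hDS : HasDerivAt (fun z : ℝ => ∫ ω, z ^ S ω) a' x := pgf_hasDerivAt S hS hx
  have hDV : HasDerivAt (fun z : ℝ => ∫ ω, z ^ V ω) b' x := pgf_hasDerivAt V hV hx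
  -- positivity of a
  have hxpos : (0 : ℝ) < x := by rw [hxdef]; linarith
  have haint : Integrable (fun ω => x ^ S ω) := by
    refine (integrable_const (1 : ℝ)).mono'
      ((measurable_from_nat (f := fun n : ℕ => x ^ n)).comp hS).aestronglyMeasurable ?_
    refine Filter.Eventually.of_forall fun ω => ?_
    rw [Real.norm_eq_abs, abs_pow]
    exact pow_le_one₀ (abs_nonneg x) hx.le
  have hapos : 0 < a := by
    rw [ha, MeasureTheory.integral_pos_iff_support_of_nonneg
      (fun ω => by positivity) haint]
    have : Function.support (fun ω => x ^ S ω) = Set.univ := by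
      ext ω; simp [Function.mem_support]
      intro h0; exact absurd h0 (ne_of_gt hxpos)
    rw [this]; simp
  have hmpos : 0 < m := by
    have h1 : (1 : ℝ) ≤ m := by
      have := MeasureTheory.integral_mono (integrable_const (1 : ℝ)) hVint
        (fun ω => by simpa using Nat.one_le_iff_ne_zero.mpr (hVpos ω).ne')
      simpa using this
    linarith
  have hγ' : γ ≠ 0 := ne_of_gt hγ0
  have ha0 : a ≠ 0 := ne_of_gt hapos
  have hm0 : m ≠ 0 := ne_of_gt hmpos
  -- derivative of the numerator
  have hN : HasDerivAt (fun z : ℝ => A * (∫ ω, z ^ S ω) * (1 - ∫ ω, z ^ V ω))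
      ((A * a') * (1 - b) + (A * a) * (-b')) x :=
    (hDS.const_mul A).mul (hDV.const_sub 1)
  -- derivative of the denominator
  have hM : HasDerivAt (fun z : ℝ => m * ((1 - z) - γ * (1 - ∫ ω, z ^ S ω)))
      (m * ((-1) - γ * (-a'))) x := by
    have h1 : HasDerivAt (fun z : ℝ => (1 : ℝ) - z) (-1) x := by
      simpa using (hasDerivAt_id x).const_sub 1
    exact ((h1.sub ((hDS.const_sub 1).const_mul γ)).const_mul m)
  have hMx : m * ((1 - x) - γ * (1 - a)) ≠ 0 := by
    have : m * ((1 - x) - γ * (1 - a)) = m * γ * a := by rw [hxdef]; ring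
    rw [this]; positivity
  have hdiv := hN.div hM hMx
  have hg : HasDerivAt
      (fun z : ℝ =>
        (A * (1 - z) * (∫ ω, z ^ S ω) / ((1 - z) - γ * (1 - ∫ ω, z ^ S ω)))
          * ((1 - ∫ ω, z ^ V ω) / (m * (1 - z))))
      ((((A * a') * (1 - b) + (A * a) * (-b')) * (m * ((1 - x) - γ * (1 - a)))
          - (A * a * (1 - b)) * (m * ((-1) - γ * (-a'))))
        / (m * ((1 - x) - γ * (1 - a))) ^ 2) x := by
    refine hdiv.congr_of_eventuallyEq ?_
    have hne : ∀ᶠ z in nhds x, z ≠ 1 := eventually_ne_nhds (by rw [hxdef]; intro h; linarith)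
    filter_upwards [hne] with z hz
    have hw : (1 : ℝ) - z ≠ 0 := sub_ne_zero.mpr (Ne.symm hz)
    set L : ℝ := ∫ ω, z ^ S ω
    set K : ℝ := ∫ ω, z ^ V ω
    set D : ℝ := (1 - z) - γ * (1 - L)
    calc (A * (1 - z) * L / D) * ((1 - K) / (m * (1 - z)))
        = (A * (1 - z) * L * (1 - K)) / (D * (m * (1 - z))) := div_mul_div_comm _ _ _ _
      _ = ((1 - z) * (A * L * (1 - K))) / ((1 - z) * (m * D)) := by ring_nf
      _ = (A * L * (1 - K)) / (m * D) := mul_div_mul_left _ _ hw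
  have hval : A / (γ * m) * ((1 - b) / (γ * a) - b')
      = (((A * a') * (1 - b) + (A * a) * (-b')) * (m * ((1 - x) - γ * (1 - a)))
          - (A * a * (1 - b)) * (m * ((-1) - γ * (-a'))))
        / (m * ((1 - x) - γ * (1 - a))) ^ 2 := by
    have h1x : (1 : ℝ) - x = γ := by rw [hxdef]; ring
    rw [h1x]
    have hD : γ - γ * (1 - a) = γ * a := by ring
    rw [hD]
    field_simp
    ring
  rw [hval]
  exact hg
end
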